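/- arXiv:2402.00189 — 4 statements merged into one kernel-verified Lean document; each statement's English description precedes it below -/
import Mathlib

section
/- Let G be a connected finite simple graph on n vertices, let D be its distance matrix, and let λ̃_1 ≥ λ̃_2 ≥ ... ≥ λ̃_n be the eigenvalues of D. Then for every integer t ≥ 1, eq_t(G) ≤ |{i ∈ {1,...,n} : λ̃_i ≤ −t}| + 1. -/
open SimpleGraph Matrix

/-- `S` is a `t`-equidistant set of `G`: all distinct vertices of `S` are at distance
exactly `t` in `G`. -/
def IsEquidistantSet {V : Type*} (G : SimpleGraph V) (t : ℕ) (S : Finset V) : Prop :=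
  (S : Set V).Pairwise fun u v => G.dist u v = t

/-- The `t`-equidistant number of `G`: the maximum size of a `t`-equidistant set. -/
noncomputable def eqNum {V : Type*} [Fintype V] (G : SimpleGraph V) (t : ℕ) : ℕ :=
  sSup {n : ℕ | ∃ S : Finset V, IsEquidistantSet G t S ∧ S.card = n}

/-- `S` is a `t`-independent set of `G`: all distinct vertices of `S` are at pairwise
distance greater than `t` in `G`. -/
def IsTIndepSet {V : Type*} (G : SimpleGraph V) (t : ℕ) (S : Finset V) : Prop :=
  (S : Set V).Pairwise fun u v => t < G.dist u v

/-- The `t`-independence number of `G`. -/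
noncomputable def indepNumT {V : Type*} [Fintype V] (G : SimpleGraph V) (t : ℕ) : ℕ :=
  sSup {n : ℕ | ∃ S : Finset V, IsTIndepSet G t S ∧ S.card = n}

/-- The equidistant number of `G`: `max {eq_t(G) : 1 ≤ t ≤ diam G}`. -/
noncomputable def eqTotalNum {V : Type*} [Fintype V] (G : SimpleGraph V) : ℕ :=
  (Finset.Icc 1 G.diam).sup (eqNum G)

/-- The distance matrix of `G`, as a real matrix. -/
noncomputable def distMatrix {V : Type*} (G : SimpleGraph V) : Matrix V V ℝ :=
  Matrix.of fun u v => (G.dist u v : ℝ)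

noncomputable def toVec {V : Type*} [Fintype V] [DecidableEq V] (S : Finset V) :
    (Fin S.card → ℝ) →ₗ[ℝ] (V → ℝ) where
  toFun c v := if h : v ∈ S then c (S.equivFin ⟨v, h⟩) else 0
  map_add' c d := by funext v; by_cases h : v ∈ S <;> simp [h]
  map_smul' r c := by funext v; by_cases h : v ∈ S <;> simp [h]

lemma toVec_apply_mem {V : Type*} [Fintype V] [DecidableEq V] (S : Finset V)
    (c : Fin S.card → ℝ) (j : Fin S.card) :
    toVec S c ((S.equivFin.symm j : S) : V) = c j := by
  have h : ((S.equivFin.symm j : S) : V) ∈ S := (S.equivFin.symm j).2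
  simp only [toVec, LinearMap.coe_mk, AddHom.coe_mk, dif_pos h]
  congr 1
  have : (⟨((S.equivFin.symm j : S) : V), h⟩ : S) = S.equivFin.symm j := Subtype.ext rfl
  rw [this, Equiv.apply_symm_apply]

lemma toVec_apply_not_mem {V : Type*} [Fintype V] [DecidableEq V] (S : Finset V)
    (c : Fin S.card → ℝ) (v : V) (hv : v ∉ S) : toVec S c v = 0 := by
  simp [toVec, hv]

lemma toVec_sum {V : Type*} [Fintype V] [DecidableEq V] (S : Finset V)
    (c : Fin S.card → ℝ) : ∑ v, toVec S c v = ∑ j, c j := by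
  rw [← Finset.sum_subset (Finset.subset_univ S)
    (fun v _ hv => toVec_apply_not_mem S c v hv)]
  rw [← Finset.sum_coe_sort S (fun v => toVec S c v)]
  rw [← Equiv.sum_comp S.equivFin.symm (fun (v : S) => toVec S c (v : V))]
  exact Finset.sum_congr rfl fun j _ => toVec_apply_mem S c j

example : True := trivial

lemma quad_eq {V : Type*} [Fintype V] [DecidableEq V] (G : SimpleGraph V) (t : ℕ)
    (S : Finset V) (hS : IsEquidistantSet G t S) (x : V → ℝ)
    (hsupp : ∀ v, v ∉ S → x v = 0) (hsum : ∑ v, x v = 0) :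
    x ⬝ᵥ (distMatrix G *ᵥ x) = -(t : ℝ) * ∑ v, x v ^ 2 := by
  have key : ∀ u v, x u * (distMatrix G u v * x v)
      = (t : ℝ) * (x u * x v) - (if u = v then (t : ℝ) * (x u * x v) else 0) := by
    intro u v
    by_cases huv : u = v
    · subst huv; simp [distMatrix]
    · simp only [if_neg huv, sub_zero]
      by_cases hu : x u = 0
      · simp [hu]
      by_cases hv : x v = 0
      · simp [hv]
      have hu' : u ∈ S := by by_contra h; exact hu (hsupp u h)
      have hv' : v ∈ S := by by_contra h; exact hv (hsupp v h)
      have hd : G.dist u v = t := hS (Finset.mem_coe.2 hu') (Finset.mem_coe.2 hv') huv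
      simp only [distMatrix, Matrix.of_apply, hd]
      ring
  calc x ⬝ᵥ (distMatrix G *ᵥ x)
      = ∑ u, ∑ v, x u * (distMatrix G u v * x v) := by
        simp [dotProduct, Matrix.mulVec, Finset.mul_sum]
    _ = ∑ u, ∑ v, ((t : ℝ) * (x u * x v) - if u = v then (t : ℝ) * (x u * x v) else 0) := by
        simp_rw [key]
    _ = (∑ u, ∑ v, (t : ℝ) * (x u * x v))
        - ∑ u, ∑ v, (if u = v then (t : ℝ) * (x u * x v) else 0) := by
        simp [Finset.sum_sub_distrib]
    _ = -(t : ℝ) * ∑ v, x v ^ 2 := by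
        have h1 : ∀ u, ∑ v, (t : ℝ) * (x u * x v) = 0 := by
          intro u
          rw [← Finset.mul_sum, ← Finset.mul_sum, hsum, mul_zero, mul_zero]
        have h2 : ∀ u : V, ∑ v, (if u = v then (t : ℝ) * (x u * x v) else 0)
            = (t : ℝ) * x u ^ 2 := by
          intro u
          rw [Finset.sum_ite_eq (Finset.univ) u (fun v => (t : ℝ) * (x u * x v))]
          simp [pow_two]
        simp only [h1, h2, Finset.sum_const_zero, zero_sub, ← Finset.mul_sum]
        ring

lemma quad_spectral {V : Type*} [Fintype V] [DecidableEq V] (A : Matrix V V ℝ)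
    (hA : A.IsHermitian) (x : V → ℝ) :
    x ⬝ᵥ (A *ᵥ x) = ∑ v, hA.eigenvalues v *
      ((star (hA.eigenvectorUnitary : Matrix V V ℝ) *ᵥ x) v) ^ 2 := by
  set U : Matrix V V ℝ := (hA.eigenvectorUnitary : Matrix V V ℝ) with hU
  set y : V → ℝ := star U *ᵥ x with hy
  have hstar : star U = Uᵀ := by
    rw [Matrix.star_eq_conjTranspose, Matrix.conjTranspose_eq_transpose_of_trivial]
  conv_lhs => rw [hA.spectral_theorem, Unitary.conjStarAlgAut_apply]
  rw [← Matrix.mulVec_mulVec, ← Matrix.mulVec_mulVec]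
  rw [Matrix.dotProduct_mulVec, ← Matrix.mulVec_transpose, ← hstar, ← hy]
  rw [RCLike.ofReal_real_eq_id]
  simp only [Function.comp_def, id]
  simp only [dotProduct, Matrix.mulVec_diagonal]
  exact Finset.sum_congr rfl fun v _ => by ring

lemma norm_spectral {V : Type*} [Fintype V] [DecidableEq V] (A : Matrix V V ℝ)
    (hA : A.IsHermitian) (x : V → ℝ) :
    ∑ v, x v ^ 2 = ∑ v, ((star (hA.eigenvectorUnitary : Matrix V V ℝ) *ᵥ x) v) ^ 2 := by
  set U : Matrix V V ℝ := (hA.eigenvectorUnitary : Matrix V V ℝ) with hU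
  have hstar : star U = Uᵀ := by
    rw [Matrix.star_eq_conjTranspose, Matrix.conjTranspose_eq_transpose_of_trivial]
  have h1 : ∑ v, ((star U *ᵥ x) v) ^ 2 = (star U *ᵥ x) ⬝ᵥ (star U *ᵥ x) := by
    simp [dotProduct, pow_two]
  have h2 : (star U *ᵥ x) ⬝ᵥ (star U *ᵥ x) = x ⬝ᵥ ((U * star U) *ᵥ x) := by
    conv_lhs => rw [hstar, Matrix.mulVec_transpose, ← Matrix.dotProduct_mulVec,
      ← Matrix.mulVec_transpose, ← hstar, Matrix.mulVec_mulVec]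
  have h3 : U * star U = 1 := Unitary.coe_mul_star_self hA.eigenvectorUnitary
  rw [h1, h2, h3, Matrix.one_mulVec]
  simp [dotProduct, pow_two]

lemma key_card_le {V : Type*} [Fintype V] [DecidableEq V] (G : SimpleGraph V)
    (hD : (distMatrix G).IsHermitian) (t : ℕ) (ht : 1 ≤ t)
    (S : Finset V) (hS : IsEquidistantSet G t S) :
    S.card ≤ (Finset.univ.filter fun v => hD.eigenvalues v ≤ -(t : ℝ)).card + 1 := by
  classical
  by_contra hcon
  push_neg at hcon
  set B : Finset V := Finset.univ.filter (fun v => hD.eigenvalues v ≤ -(t : ℝ)) with hB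
  set U : Matrix V V ℝ := (hD.eigenvectorUnitary : Matrix V V ℝ) with hU
  let φ : (V → ℝ) →ₗ[ℝ] ({v // v ∈ B} → ℝ) :=
    (LinearMap.funLeft ℝ ℝ (Subtype.val)).comp (Matrix.mulVecLin (star U))
  let sumF : (Fin S.card → ℝ) →ₗ[ℝ] ℝ := ∑ j, LinearMap.proj j
  let L : (Fin S.card → ℝ) →ₗ[ℝ] (({v // v ∈ B} → ℝ) × ℝ) :=
    LinearMap.prod (φ.comp (toVec S)) sumF
  have hnotinj : ¬ Function.Injective L := by
    intro hinj
    have hle := LinearMap.finrank_le_finrank_of_injective hinj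
    simp only [Module.finrank_pi, Module.finrank_prod, Module.finrank_self,
      Fintype.card_coe, Fintype.card_fin] at hle
    omega
  obtain ⟨c₁, c₂, h12, hne⟩ := Function.not_injective_iff.1 hnotinj
  set c : Fin S.card → ℝ := c₁ - c₂ with hcdef
  have hc : c ≠ 0 := sub_ne_zero.2 hne
  have hLc : L c = 0 := by rw [hcdef, map_sub, h12, sub_self]
  set x : V → ℝ := toVec S c with hx
  set y : V → ℝ := star U *ᵥ x with hy
  have hxsum : ∑ v, x v = 0 := by
    have h2 : (L c).2 = 0 := by rw [hLc]; rfl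
    have : sumF c = ∑ j, c j := by
      simp [sumF, LinearMap.sum_apply, LinearMap.proj_apply]
    rw [hx, toVec_sum, ← this]
    exact h2
  have hy0 : ∀ v ∈ B, y v = 0 := by
    intro v hv
    have h1 : (L c).1 = 0 := by rw [hLc]; rfl
    have := congrFun h1 ⟨v, hv⟩
    simpa [L, φ, Matrix.mulVecLin_apply, LinearMap.funLeft, hy, hx] using this
  obtain ⟨j, hj⟩ : ∃ j, c j ≠ 0 := by
    by_contra h
    push_neg at h
    exact hc (funext h)
  have hxne : x ((S.equivFin.symm j : S) : V) ≠ 0 := by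
    rw [hx, toVec_apply_mem]; exact hj
  have hQ := quad_eq G t S hS x (fun v hv => toVec_apply_not_mem S c v hv) hxsum
  have hQ2 := quad_spectral _ hD x
  have hN := norm_spectral _ hD x
  rw [← hy] at hQ2 hN
  have hzero : ∑ v, (hD.eigenvalues v + t) * y v ^ 2 = 0 := by
    have hsplit : ∑ v, (hD.eigenvalues v + (t : ℝ)) * y v ^ 2
        = (∑ v, hD.eigenvalues v * y v ^ 2) + (t : ℝ) * ∑ v, y v ^ 2 := by
      rw [Finset.mul_sum, ← Finset.sum_add_distrib]
      exact Finset.sum_congr rfl fun v _ => by ring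
    rw [hsplit, ← hQ2, ← hN, hQ]
    ring
  have hterm : ∀ v ∈ Finset.univ, (hD.eigenvalues v + (t : ℝ)) * y v ^ 2 = 0 := by
    refine (Finset.sum_eq_zero_iff_of_nonneg ?_).1 hzero
    intro v _
    by_cases hv : v ∈ B
    · rw [hy0 v hv]
      simp
    · have : -(t : ℝ) < hD.eigenvalues v := by
        by_contra h
        exact hv (Finset.mem_filter.2 ⟨Finset.mem_univ v, by linarith⟩)
      have h2 : (0 : ℝ) ≤ y v ^ 2 := sq_nonneg _
      nlinarith
  have hyv : ∀ v, y v = 0 := by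
    intro v
    by_cases hv : v ∈ B
    · exact hy0 v hv
    · have h1 : -(t : ℝ) < hD.eigenvalues v := by
        by_contra h
        exact hv (Finset.mem_filter.2 ⟨Finset.mem_univ v, by linarith⟩)
      have h2 := hterm v (Finset.mem_univ v)
      have h3 : hD.eigenvalues v + (t : ℝ) ≠ 0 := by linarith
      have h4 : y v ^ 2 = 0 := by
        rcases mul_eq_zero.1 h2 with h | h
        · exact absurd h h3
        · exact h
      exact pow_eq_zero_iff (by norm_num) |>.1 h4
  have hsum0 : ∑ v, x v ^ 2 = 0 := by
    rw [hN]
    exact Finset.sum_eq_zero fun v _ => by rw [hyv v]; ring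
  have hpos : 0 < ∑ v, x v ^ 2 := by
    refine Finset.sum_pos' (fun v _ => sq_nonneg _)
      ⟨((S.equivFin.symm j : S) : V), Finset.mem_univ _, ?_⟩
    positivity
  linarith


/-- Let `G` be connected on `n` vertices with distance matrix eigenvalues
`λ̃_1 ≥ ⋯ ≥ λ̃_n`. Then for every `t ≥ 1`,
`eq_t(G) ≤ #{i : λ̃_i ≤ -t} + 1`. -/
theorem eqNum_le_distance_spectrum_bound {V : Type*} [Fintype V] [DecidableEq V]
    (G : SimpleGraph V) (hG : G.Connected)
    (n : ℕ) (hn : Fintype.card V = n)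
    (hD : (distMatrix G).IsHermitian)
    (lam : Fin n → ℝ) (hanti : Antitone lam)
    (hlist : ∃ e : Fin n ≃ V, ∀ i, lam i = hD.eigenvalues (e i)) :
    ∀ t : ℕ, 1 ≤ t → eqNum G t ≤ {i : Fin n | lam i ≤ -(t : ℝ)}.ncard + 1 := by
  classical
  obtain ⟨e, he⟩ := hlist
  intro t ht
  have hcard : {i : Fin n | lam i ≤ -(t : ℝ)}.ncard
      = (Finset.univ.filter fun v => hD.eigenvalues v ≤ -(t : ℝ)).card := by
    have hset : {i : Fin n | lam i ≤ -(t : ℝ)}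
        = ↑(Finset.univ.filter fun i : Fin n => hD.eigenvalues (e i) ≤ -(t : ℝ)) := by
      ext i
      simp [he i]
    rw [hset, Set.ncard_coe_finset]
    refine Finset.card_bij' (fun i _ => e i) (fun v _ => e.symm v) ?_ ?_ ?_ ?_
    · intro i hi
      simp only [Finset.mem_filter, Finset.mem_univ, true_and] at hi ⊢
      exact hi
    · intro v hv
      simp only [Finset.mem_filter, Finset.mem_univ, true_and] at hv ⊢
      rwa [Equiv.apply_symm_apply]
    · intro i _
      exact e.symm_apply_apply i
    · intro v _
      exact e.apply_symm_apply v
  rw [hcard]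
  apply csSup_le
  · exact ⟨0, ∅, by simp [IsEquidistantSet], Finset.card_empty⟩
  · rintro m ⟨S, hSe, rfl⟩
    exact key_card_le G hD t ht S hSe
end

section
/- Let G be a connected d-transmission-regular finite simple graph on n ≥ 2 vertices (i.e., every row sum of its distance matrix D equals d), and let λ̃_1 ≥ λ̃_2 ≥ ... ≥ λ̃_n be the eigenvalues of D. Let t ≥ 1 be an integer. If tn − d + λ̃_2 > 0, then eq_t(G) ≤ (λ̃_2 + t)n / (tn − d + λ̃_2). If tn − d + λ̃_n < 0, then eq_t(G) ≤ (λ̃_n + t)n / (tn − d + λ̃_n). -/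
open SimpleGraph

open Matrix

section Aux

variable {V : Type*} [Fintype V] [DecidableEq V]

private lemma dot_repr (A : Matrix V V ℝ) (hA : A.IsHermitian) (z y : EuclideanSpace ℝ V) :
    z ⬝ᵥ y = ∑ v, hA.eigenvectorBasis.repr z v * hA.eigenvectorBasis.repr y v := by
  have h := hA.eigenvectorBasis.repr.inner_map_map z y
  simp only [PiLp.inner_apply, RCLike.inner_apply, conj_trivial] at h
  calc z ⬝ᵥ y = ∑ x, z x * y x := rfl
    _ = ∑ x, y x * z x := Finset.sum_congr rfl fun x _ => mul_comm _ _
    _ = ∑ v, hA.eigenvectorBasis.repr z v * hA.eigenvectorBasis.repr y v :=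
      h.symm.trans (Finset.sum_congr rfl fun x _ => mul_comm _ _)

private lemma repr_mulVec (A : Matrix V V ℝ) (hA : A.IsHermitian) (y : EuclideanSpace ℝ V)
    (v : V) :
    hA.eigenvectorBasis.repr (WithLp.toLp 2 (A *ᵥ y) : EuclideanSpace ℝ V) v
      = hA.eigenvalues v * hA.eigenvectorBasis.repr y v := by
  rw [OrthonormalBasis.repr_apply_apply, OrthonormalBasis.repr_apply_apply]
  simp only [PiLp.inner_apply, RCLike.inner_apply, conj_trivial, WithLp.ofLp_toLp]
  simp only [mul_comm _ ((hA.eigenvectorBasis v).ofLp _)]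
  have h1 : ∀ (a b : V → ℝ), a ⬝ᵥ (A *ᵥ b) = (A *ᵥ a) ⬝ᵥ b := by
    intro a b
    rw [dotProduct_mulVec, ← mulVec_transpose, (show Aᵀ = A from hA)]
  have h2 := hA.mulVec_eigenvectorBasis v
  calc ∑ i, (hA.eigenvectorBasis v) i * (A *ᵥ y) i
      = (⇑(hA.eigenvectorBasis v) : V → ℝ) ⬝ᵥ (A *ᵥ y) := rfl
    _ = (A *ᵥ ⇑(hA.eigenvectorBasis v)) ⬝ᵥ y := h1 _ _
    _ = (hA.eigenvalues v • ⇑(hA.eigenvectorBasis v)) ⬝ᵥ (y : V → ℝ) := by rw [h2]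
    _ = hA.eigenvalues v * ∑ i, (hA.eigenvectorBasis v) i * y i := by
        rw [smul_dotProduct]; rfl

/-- Quadratic form expansion in the eigenbasis. -/
private lemma dot_mulVec_repr (A : Matrix V V ℝ) (hA : A.IsHermitian)
    (y : EuclideanSpace ℝ V) :
    (y : V → ℝ) ⬝ᵥ (A *ᵥ y) = ∑ v, hA.eigenvalues v * (hA.eigenvectorBasis.repr y v)^2 := by
  have hdr := dot_repr A hA y (WithLp.toLp 2 (A *ᵥ y))
  rw [WithLp.ofLp_toLp] at hdr
  rw [hdr]
  refine Finset.sum_congr rfl fun v _ => ?_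
  rw [repr_mulVec A hA y v]; ring

private lemma quad_le_rowsum (A : Matrix V V ℝ) (hsym : Aᵀ = A) (hpos : ∀ u v, 0 ≤ A u v)
    (r : ℝ) (hr : ∀ u, ∑ v, A u v = r) (y : V → ℝ) :
    y ⬝ᵥ (A *ᵥ y) ≤ r * (y ⬝ᵥ y) := by
  have hcol : ∀ v, ∑ u, A u v = r := by
    intro v
    rw [← hr v]
    exact Finset.sum_congr rfl fun u _ => congrFun (congrFun hsym v) u
  calc y ⬝ᵥ (A *ᵥ y) = ∑ u, ∑ v, y u * (A u v * y v) := by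
        simp [dotProduct, mulVec, Finset.mul_sum]
    _ ≤ ∑ u, ∑ v, A u v * ((y u)^2 + (y v)^2) / 2 := by
        refine Finset.sum_le_sum fun u _ => Finset.sum_le_sum fun v _ => ?_
        nlinarith [mul_nonneg (hpos u v) (sq_nonneg (y u - y v))]
    _ = ∑ u, ∑ v, (A u v * (y u)^2 / 2 + A u v * (y v)^2 / 2) := by
        refine Finset.sum_congr rfl fun u _ => Finset.sum_congr rfl fun v _ => ?_
        ring
    _ = (∑ u, ∑ v, A u v * (y u)^2 / 2) + ∑ u, ∑ v, A u v * (y v)^2 / 2 := by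
        rw [← Finset.sum_add_distrib]
        exact Finset.sum_congr rfl fun u _ => Finset.sum_add_distrib
    _ = r * (y ⬝ᵥ y) := by
        rw [Finset.sum_comm (f := fun u v => A u v * (y v)^2 / 2)]
        have e1 : ∀ u : V, ∑ v, A u v * (y u)^2 / 2 = r * (y u)^2 / 2 := fun u => by
          rw [← Finset.sum_div, ← Finset.sum_mul, hr]
        have e2 : ∀ v : V, ∑ u, A u v * (y v)^2 / 2 = r * (y v)^2 / 2 := fun v => by
          rw [← Finset.sum_div, ← Finset.sum_mul, hcol]
        simp only [e1, e2, dotProduct]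
        rw [Finset.mul_sum, ← Finset.sum_add_distrib]
        exact Finset.sum_congr rfl fun v _ => by ring

private lemma eig_le_rowsum (A : Matrix V V ℝ) (hA : A.IsHermitian) (hpos : ∀ u v, 0 ≤ A u v)
    (r : ℝ) (hr : ∀ u, ∑ v, A u v = r) (v : V) : hA.eigenvalues v ≤ r := by
  have hq := quad_le_rowsum A hA hpos r hr ⇑(hA.eigenvectorBasis v)
  have h2 := hA.mulVec_eigenvectorBasis v
  rw [h2, dotProduct_smul] at hq
  have hself : ⇑(hA.eigenvectorBasis v) ⬝ᵥ ⇑(hA.eigenvectorBasis v) = 1 := by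
    have := orthonormal_iff_ite.mp hA.eigenvectorBasis.orthonormal v v
    simp only [PiLp.inner_apply, RCLike.inner_apply, conj_trivial, if_pos rfl] at this
    exact this
  rw [hself] at hq
  simpa using hq

/-- Key spectral bounds for vectors orthogonal to the all-ones vector. -/
private lemma key_bounds {n : ℕ} (A : Matrix V V ℝ) (hA : A.IsHermitian)
    (hpos : ∀ u v, 0 ≤ A u v) (r : ℝ) (hr : ∀ u, ∑ v, A u v = r)
    (hcard : Fintype.card V = n) (hn2 : 2 ≤ n)
    (lam : Fin n → ℝ) (hanti : Antitone lam)
    (e : Fin n ≃ V) (he : ∀ i, lam i = hA.eigenvalues (e i))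
    (y : EuclideanSpace ℝ V) (hy : ∑ v, y v = 0) :
    (y : V → ℝ) ⬝ᵥ (A *ᵥ y) ≤ lam ⟨1, by omega⟩ * ((y : V → ℝ) ⬝ᵥ y) ∧
    lam ⟨n-1, by omega⟩ * ((y : V → ℝ) ⬝ᵥ y) ≤ (y : V → ℝ) ⬝ᵥ (A *ᵥ y) := by
  set B := hA.eigenvectorBasis with hB
  set μ := hA.eigenvalues with hμ
  have hμe : ∀ v : V, μ v = lam (e.symm v) := by
    intro v; rw [he]; simp
  have hlam_le : ∀ i, lam i ≤ r := by
    intro i; rw [he]; exact eig_le_rowsum A hA hpos r hr _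
  set o : EuclideanSpace ℝ V := WithLp.toLp 2 (fun _ => (1:ℝ)) with ho
  have hAo : (A *ᵥ (o : V → ℝ) : V → ℝ) = r • (o : V → ℝ) := by
    funext u
    show (∑ v, A u v * 1) = r * 1
    rw [mul_one]
    simp only [mul_one, hr u]
  have heig : ∀ v, (μ v - r) * B.repr o v = 0 := by
    intro v
    have h1 := repr_mulVec A hA o v
    rw [show (WithLp.toLp 2 (A *ᵥ (o : V → ℝ)) : EuclideanSpace ℝ V) = r • o by rw [hAo]; rfl] at h1
    rw [_root_.map_smul] at h1
    simp only [PiLp.smul_apply, smul_eq_mul] at h1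
    nlinarith [h1]
  obtain ⟨v₀, hv₀⟩ : ∃ v₀, B.repr o v₀ ≠ 0 := by
    by_contra hcon
    push_neg at hcon
    have h0 : (o : V → ℝ) ⬝ᵥ o = 0 := by
      rw [dot_repr A hA o o]
      exact Finset.sum_eq_zero fun v _ => by rw [hcon v]; ring
    have h2 : (o : V → ℝ) ⬝ᵥ o = (n : ℝ) := by
      simp [ho, dotProduct, hcard]
    have hn0 : (0:ℝ) < (n:ℝ) := by exact_mod_cast (by omega : 0 < n)
    rw [h2] at h0
    linarith
  have hμ₀ : μ v₀ = r := by
    rcases mul_eq_zero.mp (heig v₀) with h' | h'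
    · linarith [h']
    · exact absurd h' hv₀
  have hyy : (y : V → ℝ) ⬝ᵥ y = ∑ v, (B.repr y v)^2 := by
    rw [dot_repr A hA y y]
    exact Finset.sum_congr rfl fun v _ => (sq (B.repr y v)).symm
  have hyAy : (y : V → ℝ) ⬝ᵥ (A *ᵥ y) = ∑ v, μ v * (B.repr y v)^2 := dot_mulVec_repr A hA y
  constructor
  · -- upper bound by lam 1
    rw [hyAy, hyy, Finset.mul_sum]
    by_cases hcase : ∃ v₁, v₁ ≠ v₀ ∧ μ v₁ = r
    · obtain ⟨v₁, hne, hμ₁⟩ := hcase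
      have hlam1 : r ≤ lam ⟨1, by omega⟩ := by
        have hk : (e.symm v₁ : ℕ) ≠ (e.symm v₀ : ℕ) := by
          intro h
          exact hne (by simpa using congrArg e (Fin.ext h))
        have h0 : lam (e.symm v₀) = r := by rw [← hμe]; exact hμ₀
        have h1 : lam (e.symm v₁) = r := by rw [← hμe]; exact hμ₁
        rcases Nat.lt_or_ge (e.symm v₀ : ℕ) 1 with hlt | hge
        · have hge1 : 1 ≤ (e.symm v₁ : ℕ) := by omega
          calc r = lam (e.symm v₁) := h1.symm
            _ ≤ lam ⟨1, by omega⟩ := hanti (Fin.le_def.mpr hge1)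
        · calc r = lam (e.symm v₀) := h0.symm
            _ ≤ lam ⟨1, by omega⟩ := hanti (Fin.le_def.mpr hge)
      refine Finset.sum_le_sum fun v _ => ?_
      have h3 : μ v ≤ lam ⟨1, by omega⟩ := by
        rw [hμe]
        exact le_trans (hlam_le _) hlam1
      nlinarith [sq_nonneg (B.repr y v)]
    · push_neg at hcase
      have hco : ∀ v, v ≠ v₀ → B.repr o v = 0 := by
        intro v hv
        rcases mul_eq_zero.mp (heig v) with h' | h'
        · exact absurd (by linarith : μ v = r) (hcase v hv)
        · exact h'
      have hcv₀ : B.repr y v₀ = 0 := by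
        have h := dot_repr A hA o y
        have hoy : (o : V → ℝ) ⬝ᵥ y = 0 := by
          calc (o : V → ℝ) ⬝ᵥ y = ∑ v, y v := by
                refine Finset.sum_congr rfl fun v _ => ?_
                show (1:ℝ) * y v = y v
                rw [one_mul]
            _ = 0 := hy
        rw [hoy] at h
        rw [Finset.sum_eq_single_of_mem v₀ (Finset.mem_univ _)
          (fun b _ hb => by rw [hco b hb]; ring)] at h
        rcases mul_eq_zero.mp h.symm with h' | h'
        · exact absurd h' hv₀
        · exact h'
      refine Finset.sum_le_sum fun v _ => ?_
      by_cases hvv : v = v₀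
      · subst hvv
        rw [hcv₀]
        simp
      · have h3 : μ v ≤ lam ⟨1, by omega⟩ := by
          rw [hμe]
          have hk : (e.symm v : ℕ) ≠ (e.symm v₀ : ℕ) := by
            intro h
            exact hvv (by simpa using congrArg e (Fin.ext h))
          rcases Nat.lt_or_ge (e.symm v : ℕ) 1 with hlt | hge
          · have hge1 : 1 ≤ (e.symm v₀ : ℕ) := by omega
            calc lam (e.symm v) ≤ r := hlam_le _
              _ = lam (e.symm v₀) := by rw [← hμe]; exact hμ₀.symm
              _ ≤ lam ⟨1, by omega⟩ := hanti (Fin.le_def.mpr hge1)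
          · exact hanti (Fin.le_def.mpr hge)
        nlinarith [sq_nonneg (B.repr y v)]
  · -- lower bound by lam (n-1)
    rw [hyAy, hyy, Finset.mul_sum]
    refine Finset.sum_le_sum fun v _ => ?_
    have h3 : lam ⟨n-1, by omega⟩ ≤ μ v := by
      rw [hμe]
      have h5 := (e.symm v).2
      exact hanti (Fin.le_def.mpr (show (e.symm v : ℕ) ≤ n - 1 by omega))
    nlinarith [sq_nonneg (B.repr y v)]

end Aux

set_option maxHeartbeats 2000000 in
/-- Let `G` be a connected `d`-transmission-regular graph on `n ≥ 2`
vertices with distance matrix eigenvalues `λ̃_1 ≥ ⋯ ≥ λ̃_n`, and let `t ≥ 1`. If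
`tn - d + λ̃_2 > 0` then `eq_t(G) ≤ (λ̃_2 + t)n/(tn - d + λ̃_2)`; if `tn - d + λ̃_n < 0`
then `eq_t(G) ≤ (λ̃_n + t)n/(tn - d + λ̃_n)`. -/
theorem eqNum_le_quotient_bounds {V : Type*} [Fintype V] [DecidableEq V]
    (G : SimpleGraph V) (hG : G.Connected)
    (n : ℕ) (hn : Fintype.card V = n) (hn2 : 2 ≤ n)
    (d : ℕ) (htr : ∀ u : V, ∑ v : V, G.dist u v = d)
    (hD : (distMatrix G).IsHermitian)
    (lam : Fin n → ℝ) (hanti : Antitone lam)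
    (hlist : ∃ e : Fin n ≃ V, ∀ i, lam i = hD.eigenvalues (e i))
    (t : ℕ) (ht : 1 ≤ t) :
    ((0 : ℝ) < t * n - d + lam ⟨1, by omega⟩ →
      (eqNum G t : ℝ) ≤
        (lam ⟨1, by omega⟩ + t) * n / (t * n - d + lam ⟨1, by omega⟩)) ∧
    ((t : ℝ) * n - d + lam ⟨n - 1, by omega⟩ < 0 →
      (eqNum G t : ℝ) ≤
        (lam ⟨n - 1, by omega⟩ + t) * n / (t * n - d + lam ⟨n - 1, by omega⟩)) := by
  classical
  have hV : Nonempty V := by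
    rw [← Fintype.card_pos_iff]; omega
  -- the maximum is attained
  have hbdd : BddAbove {m : ℕ | ∃ S : Finset V, IsEquidistantSet G t S ∧ S.card = m} :=
    ⟨Fintype.card V, by rintro m ⟨S, _, rfl⟩; exact S.card_le_univ⟩
  have hone : 1 ∈ {m : ℕ | ∃ S : Finset V, IsEquidistantSet G t S ∧ S.card = m} := by
    refine ⟨{Classical.arbitrary V}, ?_, Finset.card_singleton _⟩
    intro a ha b hb hab
    simp only [Finset.coe_singleton, Set.mem_singleton_iff] at ha hb
    exact absurd (ha.trans hb.symm) hab
  have hmem : eqNum G t ∈ {m : ℕ | ∃ S : Finset V, IsEquidistantSet G t S ∧ S.card = m} :=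
    Nat.sSup_mem ⟨1, hone⟩ hbdd
  have h1le : 1 ≤ eqNum G t := le_csSup hbdd hone
  obtain ⟨S, hS, hScard⟩ := hmem
  -- abbreviations
  set A := distMatrix G with hA'
  have hpos : ∀ u v, 0 ≤ A u v := fun u v => by
    simp [hA', distMatrix]
  have hrow : ∀ u, ∑ v, A u v = (d : ℝ) := by
    intro u
    rw [← htr u]
    push_cast
    rfl
  have hcol : ∀ v, ∑ u, A u v = (d : ℝ) := by
    intro v
    rw [← hrow v]
    refine Finset.sum_congr rfl fun u _ => ?_
    simp [hA', distMatrix, SimpleGraph.dist_comm]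
  set sR : ℝ := (eqNum G t : ℝ) with hsR
  have hs1 : (1:ℝ) ≤ sR := by rw [hsR]; exact_mod_cast h1le
  have hn0 : (0:ℝ) < (n:ℝ) := by exact_mod_cast (by omega : 0 < n)
  set x : V → ℝ := fun v => if v ∈ S then (1:ℝ) else 0 with hx
  set y : EuclideanSpace ℝ V := WithLp.toLp 2 (fun v => x v - sR / n) with hy'
  have hxsum : ∑ v : V, x v = sR := by
    rw [hx]
    simp only [Finset.sum_ite_mem, Finset.univ_inter, Finset.sum_const, nsmul_eq_mul, mul_one]
    rw [hScard]
  have hysum : ∑ v : V, y v = 0 := by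
    have : ∑ v : V, y v = (∑ v : V, x v) - ∑ v : V, (sR / n) :=
      Finset.sum_sub_distrib x (fun _ => sR / n)
    rw [this, hxsum, Finset.sum_const, Finset.card_univ, hn, nsmul_eq_mul]
    field_simp
    ring
  obtain ⟨e, he⟩ := hlist
  have hkey := key_bounds A hD hpos (d:ℝ) hrow hn hn2 lam hanti e he y hysum
  -- quadratic form values
  have hxx : ∀ v, x v * x v = x v := by
    intro v; rw [hx]; by_cases h : v ∈ S <;> simp [h]
  have hyy : (y : V → ℝ) ⬝ᵥ y = sR - sR^2/n := by
    calc (y : V → ℝ) ⬝ᵥ y = ∑ v, (x v - 2*(sR/n)*x v + (sR/n)^2) := by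
          refine Finset.sum_congr rfl fun v _ => ?_
          show (x v - sR/n) * (x v - sR/n) = _
          have := hxx v
          nlinarith [hxx v]
      _ = sR - 2*(sR/n)*sR + (sR/n)^2 * n := by
          rw [Finset.sum_add_distrib, Finset.sum_sub_distrib, hxsum, ← Finset.mul_sum, hxsum,
            Finset.sum_const, Finset.card_univ, hn, nsmul_eq_mul]
          ring
      _ = sR - sR^2/n := by field_simp <;> ring
  -- the double sum computations
  have hinner : ∀ u ∈ S, ∑ v ∈ S, A u v = (t:ℝ)*(sR-1) := by
    intro u hu
    rw [← Finset.sum_erase_add S _ hu]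
    have hAuu : A u u = 0 := by simp [hA', distMatrix]
    rw [hAuu, add_zero]
    have : ∀ v ∈ S.erase u, A u v = (t:ℝ) := by
      intro v hv
      have hvS := Finset.mem_of_mem_erase hv
      have hvu : u ≠ v := (Finset.ne_of_mem_erase hv).symm
      simp only [hA', distMatrix, Matrix.of_apply]
      exact_mod_cast congrArg Nat.cast (hS hu hvS hvu)
    rw [Finset.sum_congr rfl this, Finset.sum_const, Finset.card_erase_of_mem hu,
      nsmul_eq_mul]
    have : ((S.card - 1 : ℕ) : ℝ) = sR - 1 := by
      rw [Nat.cast_sub (by omega : 1 ≤ S.card), hScard]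
      simp
      rfl
    rw [this]
    ring
  have hT1 : ∑ u : V, ∑ v : V, x u * A u v * x v = (t:ℝ)*sR*(sR-1) := by
    have step : ∀ u : V, ∑ v : V, x u * A u v * x v = x u * ∑ v ∈ S, A u v := by
      intro u
      rw [Finset.mul_sum]
      rw [show ∑ v ∈ S, x u * A u v = ∑ v : V, (if v ∈ S then x u * A u v else 0) by
        rw [Finset.sum_ite_mem, Finset.univ_inter]]
      refine Finset.sum_congr rfl fun v _ => ?_
      rw [hx]
      by_cases h : v ∈ S <;> simp [h]
    rw [Finset.sum_congr rfl fun u _ => step u]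
    rw [show ∑ u : V, x u * ∑ v ∈ S, A u v = ∑ u ∈ S, ∑ v ∈ S, A u v by
      rw [show ∑ u ∈ S, ∑ v ∈ S, A u v
          = ∑ u : V, (if u ∈ S then ∑ v ∈ S, A u v else 0) by
        rw [Finset.sum_ite_mem, Finset.univ_inter]]
      refine Finset.sum_congr rfl fun u _ => ?_
      rw [hx]
      by_cases h : u ∈ S <;> simp [h]]
    rw [Finset.sum_congr rfl hinner, Finset.sum_const, nsmul_eq_mul, hScard]
    ring
  have hT2 : ∑ u : V, ∑ v : V, A u v * x v = (d:ℝ) * sR := by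
    rw [Finset.sum_comm]
    have step : ∀ v : V, ∑ u : V, A u v * x v = (d:ℝ) * x v := by
      intro v
      rw [← Finset.sum_mul, hcol]
    rw [Finset.sum_congr rfl fun v _ => step v, ← Finset.mul_sum, hxsum]
  have hT3 : ∑ u : V, ∑ v : V, x u * A u v = sR * (d:ℝ) := by
    have step : ∀ u : V, ∑ v : V, x u * A u v = x u * (d:ℝ) := by
      intro u
      rw [← Finset.mul_sum, hrow]
    rw [Finset.sum_congr rfl fun u _ => step u, ← Finset.sum_mul, hxsum]
  have hT4 : ∑ u : V, ∑ v : V, A u v = (n:ℝ) * (d:ℝ) := by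
    rw [Finset.sum_congr rfl fun u _ => hrow u, Finset.sum_const, Finset.card_univ, hn,
      nsmul_eq_mul]
  have hyAy : (y : V → ℝ) ⬝ᵥ (A *ᵥ y) = (t:ℝ)*sR*(sR-1) - sR^2*(d:ℝ)/n := by
    have expand : (y : V → ℝ) ⬝ᵥ (A *ᵥ y)
        = ∑ u : V, ∑ v : V, (x u * A u v * x v - (sR/n)*(A u v * x v)
            - (sR/n)*(x u * A u v) + (sR/n)^2 * A u v) := by
      calc (y : V → ℝ) ⬝ᵥ (A *ᵥ y) = ∑ u : V, ∑ v : V, y u * (A u v * y v) := by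
            simp [dotProduct, mulVec, Finset.mul_sum]
        _ = _ := by
            refine Finset.sum_congr rfl fun u _ => Finset.sum_congr rfl fun v _ => ?_
            show (x u - sR/n) * (A u v * (x v - sR/n)) = _
            ring
    rw [expand]
    have e0 : ∑ u : V, ∑ v : V, (x u * A u v * x v - (sR/n)*(A u v * x v)
            - (sR/n)*(x u * A u v) + (sR/n)^2 * A u v)
        = (∑ u : V, ∑ v : V, x u * A u v * x v)
            - (sR/n)*(∑ u : V, ∑ v : V, A u v * x v)
            - (sR/n)*(∑ u : V, ∑ v : V, x u * A u v)
            + (sR/n)^2 * (∑ u : V, ∑ v : V, A u v) := by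
      simp only [Finset.sum_add_distrib, Finset.sum_sub_distrib, Finset.mul_sum]
    rw [e0, hT1, hT2, hT3, hT4]
    field_simp
    ring
  obtain ⟨hkey1, hkey2⟩ := hkey
  rw [hyy, hyAy] at hkey1 hkey2
  constructor
  · intro hpos2
    set l2 : ℝ := lam ⟨1, by omega⟩ with hl2
    rw [le_div_iff₀ hpos2]
    -- from hkey1 : t sR (sR-1) - sR² d / n ≤ l2 (sR - sR²/n)
    have H' : (t:ℝ)*sR*(sR-1)*n - sR^2*(d:ℝ) ≤ l2*(sR*n - sR^2) := by
      have h := mul_le_mul_of_nonneg_right hkey1 (le_of_lt hn0)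
      calc (t:ℝ)*sR*(sR-1)*n - sR^2*(d:ℝ)
          = ((t:ℝ)*sR*(sR-1) - sR^2*(d:ℝ)/n) * n := by field_simp
        _ ≤ (l2 * (sR - sR^2/n)) * n := h
        _ = l2*(sR*n - sR^2) := by field_simp <;> ring
    have H2 : (t:ℝ)*(sR-1)*n - sR*(d:ℝ) ≤ l2*((n:ℝ)-sR) := by
      have e1 : sR * ((t:ℝ)*(sR-1)*n - sR*(d:ℝ)) = (t:ℝ)*sR*(sR-1)*n - sR^2*(d:ℝ) := by ring
      have e2 : sR * (l2*((n:ℝ)-sR)) = l2*(sR*n - sR^2) := by ring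
      have h := H'
      rw [← e1, ← e2] at h
      exact le_of_mul_le_mul_left h (by linarith)
    nlinarith [H2]
  · intro hneg2
    set ln : ℝ := lam ⟨n-1, by omega⟩ with hln
    rw [le_div_iff_of_neg hneg2]
    have H' : ln*(sR*n - sR^2) ≤ (t:ℝ)*sR*(sR-1)*n - sR^2*(d:ℝ) := by
      have h := mul_le_mul_of_nonneg_right hkey2 (le_of_lt hn0)
      calc ln*(sR*n - sR^2) = (ln * (sR - sR^2/n)) * n := by field_simp <;> ring
        _ ≤ ((t:ℝ)*sR*(sR-1) - sR^2*(d:ℝ)/n) * n := h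
        _ = (t:ℝ)*sR*(sR-1)*n - sR^2*(d:ℝ) := by field_simp
    have H2 : ln*((n:ℝ)-sR) ≤ (t:ℝ)*(sR-1)*n - sR*(d:ℝ) := by
      have e1 : sR * ((t:ℝ)*(sR-1)*n - sR*(d:ℝ)) = (t:ℝ)*sR*(sR-1)*n - sR^2*(d:ℝ) := by ring
      have e2 : sR * (ln*((n:ℝ)-sR)) = ln*(sR*n - sR^2) := by ring
      have h := H'
      rw [← e1, ← e2] at h
      exact le_of_mul_le_mul_left h (by linarith)
    nlinarith [H2]
end

section
/- Let G be a connected finite simple graph on n ≥ 2 vertices, let D be its distance matrix, and let λ̃_1 ≥ λ̃_2 ≥ ... ≥ λ̃_n be the eigenvalues of D. Then eq(G) ≤ |{i ∈ {1,...,n} : λ̃_i ≤ −1}| + 1. -/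
open SimpleGraph

open Matrix

lemma sum_dotProduct' {ι V : Type*} [Fintype V] (s : Finset ι) (f : ι → V → ℝ) (y : V → ℝ) :
    (∑ i ∈ s, f i) ⬝ᵥ y = ∑ i ∈ s, f i ⬝ᵥ y := by
  simp only [dotProduct, Finset.sum_apply, Finset.sum_mul]
  exact Finset.sum_comm

lemma dotProduct_sum' {ι V : Type*} [Fintype V] (s : Finset ι) (x : V → ℝ) (f : ι → V → ℝ) :
    x ⬝ᵥ (∑ i ∈ s, f i) = ∑ i ∈ s, x ⬝ᵥ f i := by
  simp only [dotProduct, Finset.sum_apply, Finset.mul_sum]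
  exact Finset.sum_comm

/-- If the quadratic form of a Hermitian real matrix is `≤ c·‖x‖²` on a subspace `W`,
then `dim W` is at most the number of eigenvalues `≤ c`. -/
lemma key_spectral {V : Type*} [Fintype V] [DecidableEq V] (A : Matrix V V ℝ)
    (hA : A.IsHermitian) (c : ℝ) (W : Submodule ℝ (V → ℝ))
    (h : ∀ x ∈ W, x ⬝ᵥ (A *ᵥ x) ≤ c * (x ⬝ᵥ x)) :
    Module.finrank ℝ W ≤ Fintype.card {v // hA.eigenvalues v ≤ c} := by
  classical
  set b := hA.eigenvectorBasis with hb
  set T := {v : V // c < hA.eigenvalues v} with hT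
  let φ : EuclideanSpace ℝ V ≃ₗ[ℝ] (V → ℝ) := WithLp.linearEquiv 2 ℝ (V → ℝ)
  let g : T → (V → ℝ) := fun i => ⇑(b i.1)
  have hbb : ∀ i j : V, (⇑(b i) : V → ℝ) ⬝ᵥ ⇑(b j) = if i = j then 1 else 0 := by
    intro i j
    have := orthonormal_iff_ite.mp b.orthonormal i j
    rw [← this]
    simp [PiLp.inner_apply, dotProduct, RCLike.inner_apply]
    exact Finset.sum_congr rfl fun _ _ => mul_comm _ _
  have hli : LinearIndependent ℝ g := by
    have h1 : LinearIndependent ℝ (fun i : T => b i.1) :=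
      b.orthonormal.linearIndependent.comp Subtype.val Subtype.val_injective
    exact h1.map' φ.toLinearMap φ.ker
  set U := Submodule.span ℝ (Set.range g) with hU
  have hUrank : Module.finrank ℝ U = Fintype.card T := finrank_span_eq_card hli
  have hmv : ∀ i : T, A *ᵥ g i = hA.eigenvalues i.1 • g i := fun i =>
    hA.mulVec_eigenvectorBasis i.1
  have hUpos : ∀ x ∈ U, x ≠ 0 → c * (x ⬝ᵥ x) < x ⬝ᵥ (A *ᵥ x) := by
    intro x hx hxne
    rw [hU, Submodule.mem_span_range_iff_exists_fun] at hx
    obtain ⟨a, rfl⟩ := hx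
    have hmv2 : A *ᵥ (∑ i : T, a i • g i) = ∑ i : T, a i • (hA.eigenvalues i.1 • g i) := by
      rw [show A *ᵥ (∑ i : T, a i • g i) = ∑ i : T, A *ᵥ (a i • g i) from
        map_sum A.mulVecLin _ _]
      exact Finset.sum_congr rfl fun i _ => by rw [mulVec_smul, hmv i]
    rw [hmv2]
    have hq : (∑ i : T, a i • g i) ⬝ᵥ (∑ i : T, a i • (hA.eigenvalues i.1 • g i))
        = ∑ i : T, hA.eigenvalues i.1 * (a i * a i) := by
      rw [dotProduct_sum']
      refine Finset.sum_congr rfl fun j _ => ?_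
      rw [sum_dotProduct']
      rw [Finset.sum_eq_single j]
      · simp [dotProduct_smul, smul_dotProduct, hbb, g]; ring
      · intro i _ hij
        have : (g i) ⬝ᵥ (g j) = 0 := by
          rw [hbb]; simp [(Subtype.coe_injective.ne hij)]
        simp [dotProduct_smul, smul_dotProduct, this]
      · intro hj; exact absurd (Finset.mem_univ j) hj
    have hxx : (∑ i : T, a i • g i) ⬝ᵥ (∑ i : T, a i • g i) = ∑ i : T, a i * a i := by
      rw [dotProduct_sum']
      refine Finset.sum_congr rfl fun j _ => ?_
      rw [sum_dotProduct']
      rw [Finset.sum_eq_single j]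
      · simp [dotProduct_smul, smul_dotProduct, hbb, g]
      · intro i _ hij
        have : (g i) ⬝ᵥ (g j) = 0 := by
          rw [hbb]; simp [(Subtype.coe_injective.ne hij)]
        simp [dotProduct_smul, smul_dotProduct, this]
      · intro hj; exact absurd (Finset.mem_univ j) hj
    rw [hq, hxx, Finset.mul_sum]
    obtain ⟨i0, hi0⟩ : ∃ i, a i ≠ 0 := by
      by_contra hall
      push_neg at hall
      exact hxne (by simp [hall])
    refine Finset.sum_lt_sum (fun i _ => ?_) ⟨i0, Finset.mem_univ i0, ?_⟩
    · exact mul_le_mul_of_nonneg_right i.2.le (mul_self_nonneg _)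
    · exact mul_lt_mul_of_pos_right i0.2 (mul_self_pos.mpr hi0)
  by_contra hlt
  push_neg at hlt
  have hcompl : Fintype.card T + Fintype.card {v // hA.eigenvalues v ≤ c} = Fintype.card V := by
    have h1 : Fintype.card T = Fintype.card {v // ¬ hA.eigenvalues v ≤ c} :=
      Fintype.card_congr (Equiv.subtypeEquivRight fun v => not_le.symm)
    have h2 := Fintype.card_subtype_compl (fun v => hA.eigenvalues v ≤ c)
    have h3 := Fintype.card_subtype_le (fun v => hA.eigenvalues v ≤ c)
    omega
  have hsum := Submodule.finrank_sup_add_finrank_inf_eq W U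
  have hle : Module.finrank ℝ ↥(W ⊔ U) ≤ Fintype.card V := by
    have := Submodule.finrank_le (W ⊔ U)
    simpa [Module.finrank_pi] using this
  have hpos : 0 < Module.finrank ℝ ↥(W ⊓ U) := by omega
  obtain ⟨x, hxmem, hxne⟩ : ∃ x ∈ W ⊓ U, x ≠ 0 := by
    rw [Module.finrank_pos_iff] at hpos
    obtain ⟨⟨x, hx⟩, hne⟩ := exists_ne (0 : ↥(W ⊓ U))
    exact ⟨x, hx, fun h0 => hne (Subtype.ext h0)⟩
  exact absurd (h x hxmem.1) (not_le.mpr (hUpos x hxmem.2 hxne))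

/-- Quadratic form of the distance matrix on zero-sum vectors supported on a
`t`-equidistant set. -/
lemma equidistant_quadratic {V : Type*} [Fintype V] [DecidableEq V] (G : SimpleGraph V)
    (t : ℕ) (S : Finset V) (hS : (S : Set V).Pairwise fun u v => G.dist u v = t)
    (x : V → ℝ) (hsupp : ∀ v, v ∉ S → x v = 0) (hsum : ∑ v ∈ S, x v = 0) :
    x ⬝ᵥ (distMatrix G *ᵥ x) = -(t:ℝ) * (x ⬝ᵥ x) := by
  classical
  have expand : x ⬝ᵥ (distMatrix G *ᵥ x) = ∑ u, x u * ∑ v, (G.dist u v : ℝ) * x v := rfl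
  rw [expand]
  have step1 : ∑ u, x u * ∑ v, (G.dist u v : ℝ) * x v
      = ∑ u ∈ S, x u * ∑ v, (G.dist u v : ℝ) * x v := by
    refine (Finset.sum_subset S.subset_univ fun u _ hu => ?_).symm
    rw [hsupp u hu, zero_mul]
  have step2 : ∀ u ∈ S, (∑ v, (G.dist u v : ℝ) * x v) = -(t:ℝ) * x u := by
    intro u hu
    have e1 : ∑ v, (G.dist u v : ℝ) * x v = ∑ v ∈ S, (G.dist u v : ℝ) * x v := by
      refine (Finset.sum_subset S.subset_univ fun v _ hv => ?_).symm
      rw [hsupp v hv, mul_zero]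
    have e2 : ∀ v ∈ S, (G.dist u v : ℝ) * x v
        = (t:ℝ) * x v - (if v = u then (t:ℝ) * x v else 0) := by
      intro v hv
      by_cases hvu : v = u
      · subst hvu; simp [SimpleGraph.dist_self]
      · rw [hS hu hv (Ne.symm hvu)]; simp [hvu]
    rw [e1, Finset.sum_congr rfl e2, Finset.sum_sub_distrib, ← Finset.mul_sum, hsum, mul_zero,
      Finset.sum_ite_eq' S u fun v => (t:ℝ) * x v]
    simp [hu]
  rw [step1, Finset.sum_congr rfl fun u hu => by rw [step2 u hu]]
  have : ∑ u ∈ S, x u * (-(t:ℝ) * x u) = -(t:ℝ) * ∑ u ∈ S, x u * x u := by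
    rw [Finset.mul_sum]; exact Finset.sum_congr rfl fun u _ => by ring
  rw [this]
  congr 1
  refine Finset.sum_subset S.subset_univ fun u _ hu => ?_
  rw [hsupp u hu, zero_mul]

/-- The cardinality bound for a single `t`-equidistant set, `1 ≤ t`. -/
lemma card_equidistant_le {V : Type*} [Fintype V] [DecidableEq V] (G : SimpleGraph V)
    (hD : (distMatrix G).IsHermitian) (t : ℕ) (ht1 : 1 ≤ t) (S : Finset V)
    (hS : IsEquidistantSet G t S) :
    S.card ≤ Fintype.card {v // hD.eigenvalues v ≤ -1} + 1 := by
  classical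
  rcases S.eq_empty_or_nonempty with rfl | ⟨u0, hu0⟩
  · simp
  -- vectors supported on S with zero sum
  let g : {u // u ∈ S.erase u0} → (V → ℝ) := fun u => Pi.single u.1 1 - Pi.single u0 1
  have hgcoord : ∀ (u : {u // u ∈ S.erase u0}) (w : V), w ∈ S.erase u0 →
      g u w = if w = u.1 then 1 else 0 := by
    intro u w hw
    have hwu0 : w ≠ u0 := Finset.ne_of_mem_erase hw
    simp [g, Pi.single_apply, hwu0]
  have hli : LinearIndependent ℝ g := by
    rw [Fintype.linearIndependent_iff]
    intro a ha u1
    have := congrFun ha u1.1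
    rw [Finset.sum_apply] at this
    have e : ∀ u : {u // u ∈ S.erase u0}, (a u • g u) u1.1
        = if u = u1 then a u else 0 := by
      intro u
      have := hgcoord u u1.1 u1.2
      simp only [Pi.smul_apply, this, smul_eq_mul]
      by_cases h : u = u1
      · subst h; simp
      · have : u1.1 ≠ u.1 := fun hh => h (Subtype.ext hh.symm)
        simp [this, h]
    rw [Finset.sum_congr rfl fun u _ => e u, Finset.sum_ite_eq' Finset.univ u1 a] at this
    simpa using this
  set W := Submodule.span ℝ (Set.range g) with hW
  have hWrank : Module.finrank ℝ W = S.card - 1 := by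
    rw [finrank_span_eq_card hli, Fintype.card_coe, Finset.card_erase_of_mem hu0]
  -- the predicate submodule
  let W' : Submodule ℝ (V → ℝ) :=
    { carrier := {x | (∀ v, v ∉ S → x v = 0) ∧ ∑ v ∈ S, x v = 0}
      add_mem' := by
        rintro x y ⟨hx1, hx2⟩ ⟨hy1, hy2⟩
        refine ⟨fun v hv => by simp [hx1 v hv, hy1 v hv], ?_⟩
        simp [Finset.sum_add_distrib, hx2, hy2]
      zero_mem' := by simp
      smul_mem' := by
        rintro c x ⟨hx1, hx2⟩
        refine ⟨fun v hv => by simp [hx1 v hv], ?_⟩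
        simp [← Finset.mul_sum, hx2] }
  have hWW' : W ≤ W' := by
    rw [hW, Submodule.span_le]
    rintro _ ⟨u, rfl⟩
    have huS : u.1 ∈ S := Finset.mem_of_mem_erase u.2
    have huu0 : u.1 ≠ u0 := Finset.ne_of_mem_erase u.2
    constructor
    · intro v hv
      have h1 : v ≠ u.1 := fun h => hv (h ▸ huS)
      have h2 : v ≠ u0 := fun h => hv (h ▸ hu0)
      simp [g, Pi.single_apply, h1, h2]
    · simp only [g, Pi.sub_apply, Finset.sum_sub_distrib, Pi.single_apply]
      rw [Finset.sum_ite_eq' S u.1 fun _ => (1:ℝ), Finset.sum_ite_eq' S u0 fun _ => (1:ℝ)]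
      simp [huS, hu0]
  have hquad : ∀ x ∈ W, x ⬝ᵥ (distMatrix G *ᵥ x) ≤ (-1 : ℝ) * (x ⬝ᵥ x) := by
    intro x hx
    obtain ⟨hsupp, hsum⟩ := hWW' hx
    rw [equidistant_quadratic G t S hS x hsupp hsum]
    have hxx : (0:ℝ) ≤ x ⬝ᵥ x := Finset.sum_nonneg fun v _ => mul_self_nonneg _
    have ht : (1:ℝ) ≤ (t:ℝ) := by exact_mod_cast ht1
    nlinarith
  have hmain := key_spectral (distMatrix G) hD (-1) W hquad
  have hScard : 1 ≤ S.card := Finset.card_pos.mpr ⟨u0, hu0⟩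
  omega

/-- Let `G` be connected on `n ≥ 2` vertices with distance matrix
eigenvalues `λ̃_1 ≥ ⋯ ≥ λ̃_n`. Then `eq(G) ≤ #{i : λ̃_i ≤ -1} + 1`. -/
theorem eqTotal_le_distance_spectrum_bound {V : Type*} [Fintype V] [DecidableEq V]
    (G : SimpleGraph V) (hG : G.Connected)
    (n : ℕ) (hn : Fintype.card V = n) (hn2 : 2 ≤ n)
    (hD : (distMatrix G).IsHermitian)
    (lam : Fin n → ℝ) (hanti : Antitone lam)
    (hlist : ∃ e : Fin n ≃ V, ∀ i, lam i = hD.eigenvalues (e i)) :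
    eqTotalNum G ≤ {i : Fin n | lam i ≤ -1}.ncard + 1 := by
  classical
  obtain ⟨e, he⟩ := hlist
  have hK : {i : Fin n | lam i ≤ -1}.ncard = Fintype.card {v // hD.eigenvalues v ≤ -1} := by
    have h1 : {i : Fin n | lam i ≤ -1} = {i : Fin n | hD.eigenvalues (e i) ≤ -1} := by
      ext i; simp [he]
    rw [h1, ← Nat.card_coe_set_eq]
    have h2 : ↥{i : Fin n | hD.eigenvalues (e i) ≤ -1} ≃ {v // hD.eigenvalues v ≤ -1} :=
      e.subtypeEquiv fun i => Iff.rfl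
    rw [Nat.card_congr h2, Nat.card_eq_fintype_card]
  rw [hK]
  apply Finset.sup_le
  intro t ht
  have ht1 : 1 ≤ t := (Finset.mem_Icc.mp ht).1
  rw [eqNum]
  apply csSup_le
  · exact ⟨0, ∅, by simp [IsEquidistantSet], Finset.card_empty⟩
  · rintro m ⟨S, hS, rfl⟩
    exact card_equidistant_le G hD t ht1 S hS
end

section
/- Let G be a connected finite simple graph on n ≥ 2 vertices, let D be its distance matrix with eigenvalues λ̃_1 ≥ λ̃_2 ≥ ... ≥ λ̃_n. Suppose there exists an integer t* with 1 ≤ t* ≤ diam(G) such that eq_{t*}(G) = |{i ∈ {1,...,n} : λ̃_i ≤ −t*}| + 1. Then eq(G) = max{eq_t(G) : 1 ≤ t ≤ t*}. -/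
open SimpleGraph

lemma card_le_of_equidistant {V : Type*} [Fintype V] [DecidableEq V]
    (G : SimpleGraph V) (hD : (distMatrix G).IsHermitian) (t : ℕ)
    (S : Finset V) (hS : IsEquidistantSet G t S) :
    S.card ≤ (Finset.univ.filter fun v => hD.eigenvalues v ≤ -(t:ℝ)).card + 1 := by
  classical
  by_contra hcon
  push_neg at hcon
  set b := hD.eigenvectorBasis with hb
  set lam' := hD.eigenvalues with hlam'
  set T : Finset V := Finset.univ.filter (fun v => lam' v ≤ -(t:ℝ)) with hT
  -- a linear map recording the sum over S and the inner products with "low" eigenvectors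
  let L : (↥S → ℝ) →ₗ[ℝ] ℝ × (↥T → ℝ) :=
    { toFun := fun x => (∑ v : ↥S, x v, fun i => ∑ v : ↥S, b i.1 v.1 * x v)
      map_add' := by
        intro x y
        refine Prod.ext ?_ ?_
        · simp [Finset.sum_add_distrib]
        · funext i
          simp [mul_add, Finset.sum_add_distrib]
      map_smul' := by
        intro a x
        refine Prod.ext ?_ ?_
        · simp [Finset.mul_sum]
        · funext i
          simp [Finset.mul_sum, mul_left_comm] }
  have hker : LinearMap.ker L ≠ ⊥ := by
    apply LinearMap.ker_ne_bot_of_finrank_lt (K := ℝ)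
    have h1 : Module.finrank ℝ (↥S → ℝ) = S.card := by
      rw [Module.finrank_fintype_fun_eq_card, Fintype.card_coe]
    have h2 : Module.finrank ℝ (ℝ × (↥T → ℝ)) = 1 + T.card := by
      rw [Module.finrank_prod, Module.finrank_self,
        Module.finrank_fintype_fun_eq_card, Fintype.card_coe]
    rw [h1, h2]
    omega
  obtain ⟨x, hxker, hx0⟩ := (Submodule.ne_bot_iff _).mp hker
  have hLx : L x = 0 := LinearMap.mem_ker.mp hxker
  have hL1 : ∑ v : ↥S, x v = 0 := by
    have := congrArg Prod.fst hLx
    simpa [L] using this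
  have hL2 : ∀ i : ↥T, ∑ v : ↥S, b i.1 v.1 * x v = 0 := by
    intro i
    have := congrFun (congrArg Prod.snd hLx) i
    simpa [L] using this
  -- the vector y on V extending x by zero
  let y : EuclideanSpace ℝ V := WithLp.toLp 2 (fun v => if h : v ∈ S then x ⟨v, h⟩ else 0)
  have hyS : ∀ v : ↥S, y v.1 = x v := fun v => dif_pos v.2
  have hyN : ∀ v, v ∉ S → y v = 0 := fun v h => dif_neg h
  have hy0 : y ≠ 0 := by
    intro h
    apply hx0
    funext v
    have : y v.1 = 0 := by rw [h]; rfl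
    rw [← hyS v, this]
    rfl
  -- sums over V localize to S
  have hloc : ∀ f : V → ℝ, (∀ v, v ∉ S → f v = 0) → ∑ v : V, f v = ∑ v : ↥S, f v.1 := by
    intro f hf
    rw [Finset.sum_coe_sort S f]
    exact (Finset.sum_subset (Finset.subset_univ S) (fun v _ hv => hf v hv)).symm
  have hsum : ∑ v : V, y v = 0 := by
    rw [hloc y hyN]
    rw [← hL1]
    exact Finset.sum_congr rfl fun v _ => hyS v
  let c : V → ℝ := fun j => (inner ℝ (b j) y : ℝ)
  have hcdef : ∀ j, c j = ∑ v : V, b j v * y v := by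
    intro j
    simp [c, PiLp.inner_apply]
    exact Finset.sum_congr rfl fun _ _ => mul_comm _ _
  have hc0 : ∀ j ∈ T, c j = 0 := by
    intro j hj
    rw [hcdef j, hloc _ (fun v hv => by rw [hyN v hv, mul_zero])]
    rw [← hL2 ⟨j, hj⟩]
    exact Finset.sum_congr rfl fun v _ => by rw [hyS v]
  -- spectral computation
  have hsymm := (Matrix.isHermitian_iff_isSymmetric.mp hD)
  have hTb : ∀ j, (Matrix.toEuclideanLin (distMatrix G)) (b j) = lam' j • (b j) := by
    intro j
    apply PiLp.ext
    intro u
    have := congrFun (hD.mulVec_eigenvectorBasis j) u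
    simpa [Matrix.toEuclideanLin_apply] using this
  set w := Matrix.toEuclideanLin (distMatrix G) y with hw
  have hQa : (inner ℝ y w : ℝ) = ∑ j : V, lam' j * (c j * c j) := by
    rw [← b.sum_inner_mul_inner y w]
    refine Finset.sum_congr rfl fun j _ => ?_
    have h1 : (inner ℝ (b j) w : ℝ) = lam' j * c j := by
      rw [hw, ← hsymm (b j) y, hTb j, inner_smul_left]
      simp [c]
    have h2 : (inner ℝ y (b j) : ℝ) = c j := real_inner_comm _ _
    rw [h1, h2]
    ring
  have hwu : ∀ u, w u = ∑ v : V, (G.dist u v : ℝ) * y v := fun u => rfl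
  have hQb : (inner ℝ y w : ℝ) = -(t:ℝ) * ∑ u : V, y u * y u := by
    have hexp : (inner ℝ y w : ℝ) = ∑ u : V, y u * w u := by
      simp [PiLp.inner_apply]
      exact Finset.sum_congr rfl fun _ _ => mul_comm _ _
    rw [hexp]
    have key : ∀ u v : V, y u * ((G.dist u v : ℝ) * y v)
        = (t:ℝ) * (y u * y v) - (if u = v then (t:ℝ) * (y u * y u) else 0) := by
      intro u v
      by_cases huv : u = v
      · subst huv
        simp [SimpleGraph.dist_self]
      · by_cases hu : u ∈ S
        · by_cases hv : v ∈ S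
          · have hd : G.dist u v = t := hS hu hv huv
            simp only [hd, if_neg huv]
            ring
          · rw [hyN v hv]
            simp [huv]
        · rw [hyN u hu]
          simp [huv]
    calc ∑ u : V, y u * w u
        = ∑ u : V, ∑ v : V, y u * ((G.dist u v : ℝ) * y v) := by
          refine Finset.sum_congr rfl fun u _ => ?_
          rw [hwu u, Finset.mul_sum]
      _ = ∑ u : V, ∑ v : V, ((t:ℝ) * (y u * y v) - if u = v then (t:ℝ) * (y u * y u) else 0) := by
          refine Finset.sum_congr rfl fun u _ => Finset.sum_congr rfl fun v _ => key u v
      _ = (∑ u : V, ∑ v : V, (t:ℝ) * (y u * y v))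
            - ∑ u : V, ∑ v : V, (if u = v then (t:ℝ) * (y u * y u) else 0) := by
          rw [← Finset.sum_sub_distrib]
          exact Finset.sum_congr rfl fun u _ => by rw [← Finset.sum_sub_distrib]
      _ = (t:ℝ) * ((∑ u : V, y u) * (∑ u : V, y u)) - ∑ u : V, (t:ℝ) * (y u * y u) := by
          congr 1
          · rw [Finset.sum_mul_sum, Finset.mul_sum]
            exact Finset.sum_congr rfl fun u _ => by rw [Finset.mul_sum]
          · exact Finset.sum_congr rfl fun u _ => by simp
      _ = -(t:ℝ) * ∑ u : V, y u * y u := by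
          rw [hsum, ← Finset.mul_sum]
          ring
  have hnorm : ∑ u : V, y u * y u = ∑ j : V, c j * c j := by
    have h1 : (inner ℝ y y : ℝ) = ∑ u : V, y u * y u := by
      rw [PiLp.inner_apply]; simp only [RCLike.inner_apply', conj_trivial]
    have h2 : (inner ℝ y y : ℝ) = ∑ j : V, c j * c j := by
      rw [← b.sum_inner_mul_inner y y]
      refine Finset.sum_congr rfl fun j _ => ?_
      have h3 : (inner ℝ y (b j) : ℝ) = c j := real_inner_comm (b j) y
      have h4 : (inner ℝ (b j) y : ℝ) = c j := rfl
      rw [h3, h4]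
    rw [← h1, h2]
  have heq : ∑ j : V, lam' j * (c j * c j) = -(t:ℝ) * ∑ j : V, c j * c j := by
    rw [← hQa, hQb, hnorm]
  have hexists : ∃ j, c j ≠ 0 := by
    by_contra hall
    push_neg at hall
    apply hy0
    have hyy : (inner ℝ y y : ℝ) = 0 := by
      rw [← b.sum_inner_mul_inner y y]
      refine Finset.sum_eq_zero fun j _ => ?_
      have : (inner ℝ (b j) y : ℝ) = 0 := hall j
      rw [this, mul_zero]
    exact inner_self_eq_zero.mp hyy
  obtain ⟨j0, hj0⟩ := hexists
  have hnotT : ∀ j, c j ≠ 0 → -(t:ℝ) < lam' j := by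
    intro j hj
    by_contra hh
    push_neg at hh
    exact hj (hc0 j (Finset.mem_filter.mpr ⟨Finset.mem_univ _, hh⟩))
  have hstrict : ∑ j : V, -(t:ℝ) * (c j * c j) < ∑ j : V, lam' j * (c j * c j) := by
    apply Finset.sum_lt_sum
    · intro j _
      rcases eq_or_ne (c j) 0 with h | h
      · simp [h]
      · exact mul_le_mul_of_nonneg_right (hnotT j h).le (mul_self_nonneg _)
    · exact ⟨j0, Finset.mem_univ _, mul_lt_mul_of_pos_right (hnotT j0 hj0) (mul_self_pos.mpr hj0)⟩
  rw [heq, Finset.mul_sum] at hstrict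
  exact lt_irrefl _ hstrict


/-- Let `G` be connected on `n ≥ 2` vertices with distance matrix
eigenvalues `λ̃_1 ≥ ⋯ ≥ λ̃_n`. If there is `1 ≤ t* ≤ diam(G)` with
`eq_{t*}(G) = #{i : λ̃_i ≤ -t*} + 1`, then `eq(G) = max {eq_t(G) : 1 ≤ t ≤ t*}`. -/
theorem eqTotal_eq_sup_up_to_tstar {V : Type*} [Fintype V] [DecidableEq V]
    (G : SimpleGraph V) (hG : G.Connected)
    (n : ℕ) (hn : Fintype.card V = n) (hn2 : 2 ≤ n)
    (hD : (distMatrix G).IsHermitian)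
    (lam : Fin n → ℝ) (hanti : Antitone lam)
    (hlist : ∃ e : Fin n ≃ V, ∀ i, lam i = hD.eigenvalues (e i))
    (tstar : ℕ) (ht1 : 1 ≤ tstar) (ht2 : tstar ≤ G.diam)
    (htight : eqNum G tstar = {i : Fin n | lam i ≤ -(tstar : ℝ)}.ncard + 1) :
    eqTotalNum G = (Finset.Icc 1 tstar).sup (eqNum G) := by
  classical
  obtain ⟨e, he⟩ := hlist
  have hbound : ∀ t : ℕ, eqNum G t ≤
      (Finset.univ.filter fun v => hD.eigenvalues v ≤ -(t:ℝ)).card + 1 := by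
    intro t
    have hne : {m : ℕ | ∃ S : Finset V, IsEquidistantSet G t S ∧ S.card = m}.Nonempty :=
      ⟨0, ∅, by simp [IsEquidistantSet], rfl⟩
    apply csSup_le hne
    rintro k ⟨S, hS, rfl⟩
    exact card_le_of_equidistant G hD t S hS
  have hmono : ∀ t : ℕ, tstar ≤ t →
      (Finset.univ.filter fun v => hD.eigenvalues v ≤ -(t:ℝ)).card ≤
      (Finset.univ.filter fun v => hD.eigenvalues v ≤ -(tstar:ℝ)).card := by
    intro t ht
    apply Finset.card_le_card
    intro v hv
    simp only [Finset.mem_filter, Finset.mem_univ, true_and] at hv ⊢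
    refine hv.trans ?_
    have : (tstar : ℝ) ≤ (t : ℝ) := by exact_mod_cast ht
    linarith
  have hcard : {i : Fin n | lam i ≤ -(tstar : ℝ)}.ncard
      = (Finset.univ.filter fun v => hD.eigenvalues v ≤ -(tstar:ℝ)).card := by
    have h1 : {i : Fin n | lam i ≤ -(tstar : ℝ)}.ncard
        = (Finset.univ.filter fun i : Fin n => lam i ≤ -(tstar:ℝ)).card := by
      rw [Set.ncard_eq_toFinset_card']
      congr 1
      ext i
      simp
    rw [h1]
    apply Finset.card_bij (fun i _ => e i)
    · intro i hi
      simp only [Finset.mem_filter, Finset.mem_univ, true_and] at hi ⊢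
      rwa [← he i]
    · intro a _ b _ hab
      exact e.injective hab
    · intro v hv
      simp only [Finset.mem_filter, Finset.mem_univ, true_and] at hv ⊢
      exact ⟨e.symm v, by rw [he, Equiv.apply_symm_apply]; exact hv, by simp⟩
  have hkey : ∀ t : ℕ, tstar ≤ t → eqNum G t ≤ eqNum G tstar := by
    intro t ht
    calc eqNum G t ≤ _ + 1 := hbound t
      _ ≤ (Finset.univ.filter fun v => hD.eigenvalues v ≤ -(tstar:ℝ)).card + 1 :=
          Nat.add_le_add_right (hmono t ht) 1
      _ = eqNum G tstar := by rw [← hcard, ← htight]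
  apply le_antisymm
  · apply Finset.sup_le
    intro t ht
    rw [Finset.mem_Icc] at ht
    rcases le_or_gt t tstar with h | h
    · exact Finset.le_sup (Finset.mem_Icc.mpr ⟨ht.1, h⟩)
    · exact (hkey t h.le).trans (Finset.le_sup (Finset.mem_Icc.mpr ⟨ht1, le_refl _⟩))
  · exact Finset.sup_mono (Finset.Icc_subset_Icc_right ht2)
end
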